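/- arXiv:1006.2952 — 2 statements merged into one kernel-verified Lean document; each statement's English description precedes it below -/
import Mathlib

section
/- Let R be a commutative Noetherian ring and let n, r be positive integers with ringKrullDim R ≤ n − 3. Let σ be an r × (n+r) matrix over R admitting a right inverse, i.e., there exists an (n+r) × r matrix τ over R with σ · τ equal to the r × r identity matrix. Then σ can be completed to an elementary matrix: there exists an invertible (n+r) × (n+r) matrix Δ lying in the subgroup E_{n+r}(R) of GL_{n+r}(R) generated by elementary matrices, such that the first r rows of Δ are exactly the rows of σ. -/
open Finset in
theorem my_prime_avoidance {R : Type*} [CommRing R] (a b : R) (S : Finset (Ideal R))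
    (hprime : ∀ p ∈ S, p.IsPrime) (hb : ∀ p ∈ S, b ∉ p) :
    ∃ t : R, ∀ p ∈ S, a + t * b ∉ p := by
  classical
  induction S using Finset.strongInduction with
  | _ S ih =>
    by_cases hcomp : ∃ p ∈ S, ∃ q ∈ S, p ≠ q ∧ p ≤ q
    · obtain ⟨p, hp, q, hq, hne, hle⟩ := hcomp
      obtain ⟨t, ht⟩ := ih (S.erase p) (Finset.erase_ssubset hp)
        (fun r hr => hprime r (Finset.mem_of_mem_erase hr))
        (fun r hr => hb r (Finset.mem_of_mem_erase hr))
      refine ⟨t, fun r hr => ?_⟩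
      by_cases hrp : r = p
      · subst hrp
        intro hmem
        exact ht q (Finset.mem_erase.mpr ⟨hne.symm, hq⟩) (hle hmem)
      · exact ht r (Finset.mem_erase.mpr ⟨hrp, hr⟩)
    · push_neg at hcomp
      have hpick : ∀ p ∈ S, ∀ q ∈ S, p ≠ q → ∃ x, x ∈ p ∧ x ∉ q := by
        intro p hp q hq hne
        have h1 : ¬p ≤ q := hcomp p hp q hq hne
        exact SetLike.not_le_iff_exists.mp h1
      choose! x hx1 hx2 using hpick
      set T := S.filter (fun p => a ∈ p) with hT
      set t := ∑ p ∈ T, ∏ q ∈ S.erase p, x q p with htdef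
      refine ⟨t, fun p hp hcon => ?_⟩
      have hP := hprime p hp
      by_cases hap : a ∈ p
      · have htb : t * b ∈ p := by
          have := p.sub_mem hcon hap
          simpa using this
        have ht : t ∈ p := (hP.mem_or_mem htb).resolve_right (hb p hp)
        have hpT : p ∈ T := Finset.mem_filter.mpr ⟨hp, hap⟩
        rw [htdef, ← Finset.add_sum_erase _ _ hpT] at ht
        have hrest : ∑ q ∈ T.erase p, ∏ q' ∈ S.erase q, x q' q ∈ p := by
          refine Ideal.sum_mem _ (fun q hq => ?_)
          have hqT : q ∈ T := Finset.mem_of_mem_erase hq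
          have hqS : q ∈ S := (Finset.mem_filter.mp hqT).1
          have hqp : q ≠ p := (Finset.mem_erase.mp hq).1
          have hpSq : p ∈ S.erase q := Finset.mem_erase.mpr ⟨fun h => hqp h.symm, hp⟩
          have : x p q ∈ p := hx1 p hp q hqS (fun h => hqp h.symm)
          obtain ⟨u, hu⟩ := Finset.dvd_prod_of_mem (fun q' => x q' q) hpSq
          rw [hu]
          exact Ideal.mul_mem_right _ _ this
        have hterm : ∏ q ∈ S.erase p, x q p ∈ p := by
          have := p.sub_mem ht hrest
          simpa using this
        obtain ⟨q, hq, hqmem⟩ := (Ideal.IsPrime.prod_mem_iff (hp := hP)).mp hterm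
        have hqS : q ∈ S := Finset.mem_of_mem_erase hq
        have hqp : q ≠ p := (Finset.mem_erase.mp hq).1
        exact hx2 q hqS p hp hqp hqmem
      · have ht : t ∈ p := by
          refine Ideal.sum_mem _ (fun q hq => ?_)
          have hqS : q ∈ S := (Finset.mem_filter.mp hq).1
          have haq : a ∈ q := (Finset.mem_filter.mp hq).2
          have hqp : q ≠ p := fun h => hap (h ▸ haq)
          have hpSq : p ∈ S.erase q := Finset.mem_erase.mpr ⟨fun h => hqp h.symm, hp⟩
          have : x p q ∈ p := hx1 p hp q hqS (fun h => hqp h.symm)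
          obtain ⟨u, hu⟩ := Finset.dvd_prod_of_mem (fun q' => x q' q) hpSq
          rw [hu]
          exact Ideal.mul_mem_right _ _ this
        have : a ∈ p := by
          have := p.sub_mem hcon (p.mul_mem_right b ht)
          simpa using this
        exact hap this


/-- chains of primes avoiding `a₀` have length at most `D`. -/
def PrimeChainCond (R : Type*) [CommRing R] (D : ℕ) (a₀ : R) : Prop :=
  ∀ (k : ℕ) (c : Fin (k + 1) → Ideal R), StrictMono c → (∀ i, (c i).IsPrime) →
    (∀ i, a₀ ∉ c i) → k ≤ D

theorem chain_le_of_krullDim {R : Type*} [CommRing R] {n : ℕ}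
    (hdim : ringKrullDim R + ((3 : ℕ) : WithBot ℕ∞) ≤ ((n : ℕ) : WithBot ℕ∞))
    (k : ℕ) (c : Fin (k + 1) → Ideal R) (hsm : StrictMono c) (hpr : ∀ i, (c i).IsPrime) :
    k + 3 ≤ n := by
  let s : LTSeries (PrimeSpectrum R) :=
    { length := k
      toFun := fun i => ⟨c i, hpr i⟩
      step := fun i => by
        have := hsm (Fin.castSucc_lt_succ (i := i))
        exact (PrimeSpectrum.asIdeal_lt_asIdeal _ _).mp this }
  have h1 : (k : WithBot ℕ∞) ≤ ringKrullDim R := Order.LTSeries.length_le_krullDim s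
  have h2 : (k : WithBot ℕ∞) + ((3 : ℕ) : WithBot ℕ∞) ≤ (n : WithBot ℕ∞) :=
    le_trans (add_le_add_left h1 _) hdim
  have h3 : ((k + 3 : ℕ) : WithBot ℕ∞) ≤ ((n : ℕ) : WithBot ℕ∞) := by
    push_cast
    exact_mod_cast h2
  exact_mod_cast h3

universe u

theorem keyL : ∀ (d : ℕ) (R : Type u) [CommRing R] [IsNoetherianRing R] (a₀ : R),
    PrimeChainCond R d a₀ → ∀ (m : ℕ), d + 1 ≤ m → ∀ (v : Fin m → R),
    ∃ t : Fin m → R, ∀ P : Ideal R, P.IsPrime → (∀ i, v i + t i * a₀ ∈ P) → a₀ ∈ P := by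
  intro d
  induction d with
  | zero =>
    intro R _ _ a₀ hPC m hm v
    classical
    obtain ⟨m', rfl⟩ : ∃ m', m = m' + 1 := ⟨m - 1, by omega⟩
    set S : Finset (Ideal R) :=
      ((minimalPrimes.finite_of_isNoetherianRing R).toFinset.filter (fun p => a₀ ∉ p)) with hS
    have hSprime : ∀ p ∈ S, p.IsPrime := by
      intro p hp
      rw [hS, Finset.mem_filter, Set.Finite.mem_toFinset] at hp
      exact hp.1.1.1
    have hSa : ∀ p ∈ S, a₀ ∉ p := by
      intro p hp
      rw [hS, Finset.mem_filter] at hp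
      exact hp.2
    obtain ⟨t₀, ht₀⟩ := my_prime_avoidance (v 0) a₀ S hSprime hSa
    refine ⟨fun i => if i = 0 then t₀ else 0, fun P hP hmem => ?_⟩
    by_contra ha₀
    obtain ⟨q, hq, hqP⟩ := Ideal.exists_minimalPrimes_le (I := ⊥) (J := P) bot_le
    have hqprime : q.IsPrime := hq.1.1
    have ha₀q : a₀ ∉ q := fun h => ha₀ (hqP h)
    have hqS : q ∈ S := by
      rw [hS, Finset.mem_filter, Set.Finite.mem_toFinset]; exact ⟨hq, ha₀q⟩
    have hx : v 0 + t₀ * a₀ ∉ q := ht₀ q hqS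
    have hxP : v 0 + t₀ * a₀ ∈ P := by simpa using hmem 0
    have hqne : q ≠ P := fun h => hx (h ▸ hxP)
    have hqlt : q < P := lt_of_le_of_ne hqP hqne
    have := hPC 1 (fun i => if i = 0 then q else P) ?_ ?_ ?_
    · omega
    · intro i j hij
      fin_cases i <;> fin_cases j <;> simp_all
    · intro i; fin_cases i <;> simp_all [hqprime, hP]
    · intro i; fin_cases i <;> simp_all
  | succ d ih =>
    intro R _ _ a₀ hPC m hm v
    classical
    obtain ⟨m', rfl⟩ : ∃ m', m = m' + 1 := ⟨m - 1, by omega⟩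
    set S : Finset (Ideal R) :=
      ((minimalPrimes.finite_of_isNoetherianRing R).toFinset.filter (fun p => a₀ ∉ p)) with hS
    have hSprime : ∀ p ∈ S, p.IsPrime := by
      intro p hp
      rw [hS, Finset.mem_filter, Set.Finite.mem_toFinset] at hp
      exact hp.1.1.1
    have hSa : ∀ p ∈ S, a₀ ∉ p := by
      intro p hp
      rw [hS, Finset.mem_filter] at hp
      exact hp.2
    obtain ⟨t₀, ht₀⟩ := my_prime_avoidance (v 0) a₀ S hSprime hSa
    set x := v 0 + t₀ * a₀ with hxdef
    have hK : ∀ q ∈ minimalPrimes R, a₀ ∉ q → x ∉ q := by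
      intro q hq ha
      refine ht₀ q ?_
      rw [hS, Finset.mem_filter, Set.Finite.mem_toFinset]; exact ⟨hq, ha⟩
    set mk := Ideal.Quotient.mk (Ideal.span {x}) with hmk
    have hmksurj : Function.Surjective mk := Ideal.Quotient.mk_surjective
    have hPC' : PrimeChainCond (R ⧸ Ideal.span {x}) d (mk a₀) := by
      intro k c hsm hpr hav
      let e : Fin (k + 1) → Ideal R := fun i => (c i).comap mk
      have hepr : ∀ i, (e i).IsPrime := fun i => (hpr i).comap _
      have hesm : StrictMono e := by
        intro i j hij
        have hle := hsm hij
        refine lt_of_le_of_ne (Ideal.comap_mono hle.le) (fun h => hle.ne ?_)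
        exact Ideal.comap_injective_of_surjective _ hmksurj h
      have heav : ∀ i, a₀ ∉ e i := fun i h => hav i h
      have hex : ∀ i, x ∈ e i := by
        intro i
        show mk x ∈ c i
        have h0 : mk x = 0 := Ideal.Quotient.eq_zero_iff_mem.mpr (Ideal.subset_span rfl)
        rw [h0]
        exact (c i).zero_mem
      obtain ⟨q, hq, hqe⟩ := @Ideal.exists_minimalPrimes_le _ _ ⊥ (e 0) (hepr 0) bot_le
      have hqprime : q.IsPrime := hq.1.1
      have ha₀q : a₀ ∉ q := fun h => heav 0 (hqe h)
      have hxq : x ∉ q := hK q hq ha₀q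
      have hqlt : q < e 0 := lt_of_le_of_ne hqe (fun h => hxq (h ▸ hex 0))
      let c' : Fin (k + 1 + 1) → Ideal R := Fin.cases q e
      have hc'sm : StrictMono c' := by
        rw [Fin.strictMono_iff_lt_succ]
        intro i
        induction i using Fin.cases with
        | zero => exact hqlt
        | succ j =>
          have h1 : c' (Fin.castSucc (Fin.succ j)) = e (Fin.castSucc j) := by
            rw [← Fin.succ_castSucc]; simp [c']
          rw [h1]
          simpa [c'] using hesm (Fin.castSucc_lt_succ (i := j))
      have hc'pr : ∀ i, (c' i).IsPrime := by
        intro i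
        induction i using Fin.cases with
        | zero => simpa [c'] using hqprime
        | succ j => simpa [c'] using hepr j
      have hc'av : ∀ i, a₀ ∉ c' i := by
        intro i
        induction i using Fin.cases with
        | zero => simpa [c'] using ha₀q
        | succ j => simpa [c'] using heav j
      have := hPC (k + 1) c' hc'sm hc'pr hc'av
      omega
    obtain ⟨tb, htb⟩ := ih (R ⧸ Ideal.span {x}) (mk a₀) hPC' m' (by omega)
      (fun i => mk (v (Fin.succ i)))
    choose s hs using fun i => hmksurj (tb i)
    refine ⟨Fin.cons t₀ s, fun P hP hmem => ?_⟩
    have hxP : x ∈ P := by simpa [hxdef] using hmem 0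
    have hker : Ideal.span {x} ≤ P := by
      rw [Ideal.span_le, Set.singleton_subset_iff]; exact hxP
    haveI : (P.map mk).IsPrime := by
      refine Ideal.map_isPrime_of_surjective hmksurj ?_
      rwa [hmk, Ideal.mk_ker]
    have hmem' : ∀ i, (fun i => mk (v (Fin.succ i))) i + tb i * mk a₀ ∈ P.map mk := by
      intro i
      have h1 : v (Fin.succ i) + s i * a₀ ∈ P := by simpa using hmem (Fin.succ i)
      have : mk (v (Fin.succ i) + s i * a₀) ∈ P.map mk := Ideal.mem_map_of_mem _ h1
      simpa [map_add, map_mul, hs] using this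
    have ha : mk a₀ ∈ P.map mk := htb (P.map mk) ‹_› hmem'
    have : a₀ ∈ (P.map mk).comap mk := ha
    rw [Ideal.comap_map_of_surjective _ hmksurj] at this
    rcases Submodule.mem_sup.mp this with ⟨y, hy, z, hz, rfl⟩
    have hz' : z ∈ Ideal.span {x} := Ideal.Quotient.eq_zero_iff_mem.mp (Ideal.mem_bot.mp hz)
    exact P.add_mem hy (hker hz')

theorem bassSR {R : Type u} [CommRing R] [IsNoetherianRing R] {D m : ℕ} (a₀ : R)
    (hPC : PrimeChainCond R D a₀) (hm : D + 1 ≤ m) (v : Fin m → R)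
    (hu : ∃ (c₀ : R) (c : Fin m → R), c₀ * a₀ + ∑ i, c i * v i = 1) :
    ∃ t c : Fin m → R, ∑ i, c i * (v i + t i * a₀) = 1 := by
  obtain ⟨t, ht⟩ := keyL D R a₀ hPC m hm v
  set w : Fin m → R := fun i => v i + t i * a₀ with hw
  have hspan : Ideal.span (Set.range w) = ⊤ := by
    by_contra hne
    obtain ⟨M, hM, hle⟩ := Ideal.exists_le_maximal _ hne
    have hMp : M.IsPrime := hM.isPrime
    have hwM : ∀ i, w i ∈ M := fun i => hle (Ideal.subset_span ⟨i, rfl⟩)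
    have ha₀ : a₀ ∈ M := ht M hMp hwM
    have hv : ∀ i, v i ∈ M := by
      intro i
      have : w i - t i * a₀ ∈ M := M.sub_mem (hwM i) (M.mul_mem_left _ ha₀)
      simpa [hw] using this
    obtain ⟨c₀, c, hc⟩ := hu
    have : (1 : R) ∈ M := by
      rw [← hc]
      exact M.add_mem (M.mul_mem_left _ ha₀) (Ideal.sum_mem _ fun i _ => M.mul_mem_left _ (hv i))
    exact hM.ne_top (Ideal.eq_top_of_isUnit_mem _ this isUnit_one)
  have h1 : (1 : R) ∈ Ideal.span (Set.range w) := hspan ▸ Submodule.mem_top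
  obtain ⟨c, hc⟩ := (Submodule.mem_span_range_iff_exists_fun R).mp h1
  exact ⟨t, c, by simpa [smul_eq_mul] using hc⟩


/-- The subgroup `E_m(R)` of `GL_m(R)` generated by the elementary matrices
`1 + a • E_{ij}` (`i ≠ j`). -/
def elementarySubgroup (R : Type*) [CommRing R] (m : ℕ) :
    Subgroup (Matrix.GeneralLinearGroup (Fin m) R) :=
  Subgroup.closure { M | ∃ (i j : Fin m) (a : R), i ≠ j ∧
    (M : Matrix (Fin m) (Fin m) R) = 1 + Matrix.single i j a }

namespace ElemAux

variable {R : Type*} [CommRing R] {m r : ℕ}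

open Matrix

/-- transvection as a unit -/
def tvu (i j : Fin m) (h : i ≠ j) (a : R) : Matrix.GeneralLinearGroup (Fin m) R where
  val := transvection i j a
  inv := transvection i j (-a)
  val_inv := by rw [transvection_mul_transvection_same _ _ h, add_neg_cancel, transvection_zero]
  inv_val := by rw [transvection_mul_transvection_same _ _ h, neg_add_cancel, transvection_zero]

theorem tvu_mem (i j : Fin m) (h : i ≠ j) (a : R) :
    tvu i j h a ∈ elementarySubgroup R m :=
  Subgroup.subset_closure ⟨i, j, a, h, rfl⟩

theorem mul_tv_apply (σ : Matrix (Fin r) (Fin m) R) (p q : Fin m) (a : R) (i : Fin r)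
    (j : Fin m) :
    (σ * transvection p q a) i j = σ i j + if j = q then σ i p * a else 0 := by
  rw [transvection, Matrix.mul_add, Matrix.mul_one, Matrix.add_apply]
  congr 1
  rw [Matrix.mul_apply]
  have h : ∀ k, σ i k * single p q a k j
      = if k = p then (if j = q then σ i p * a else 0) else 0 := by
    intro k
    simp only [single, of_apply]
    by_cases hkp : k = p <;> by_cases hjq : j = q <;>
      simp [hkp, hjq, eq_comm (a := p), eq_comm (a := q), Ne.symm]
  rw [Finset.sum_congr rfl fun k _ => h k, Finset.sum_ite_eq' Finset.univ p _]
  simp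

/-- elementary column equivalence -/
def MR (σ τ : Matrix (Fin r) (Fin m) R) : Prop :=
  ∃ g : Matrix.GeneralLinearGroup (Fin m) R, g ∈ elementarySubgroup R m ∧
    σ * (g : Matrix (Fin m) (Fin m) R) = τ

theorem MR.refl (σ : Matrix (Fin r) (Fin m) R) : MR σ σ :=
  ⟨1, one_mem _, by simp⟩

theorem MR.trans {σ τ ρ : Matrix (Fin r) (Fin m) R} (h1 : MR σ τ) (h2 : MR τ ρ) : MR σ ρ := by
  obtain ⟨g1, hg1, e1⟩ := h1
  obtain ⟨g2, hg2, e2⟩ := h2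
  exact ⟨g1 * g2, mul_mem hg1 hg2, by rw [Units.val_mul, ← Matrix.mul_assoc, e1, e2]⟩

theorem MR_colOp (σ : Matrix (Fin r) (Fin m) R) {p q : Fin m} (hpq : p ≠ q) (a : R) :
    MR σ (fun i j => if j = q then σ i q + σ i p * a else σ i j) := by
  refine ⟨tvu p q hpq a, tvu_mem _ _ _ _, ?_⟩
  ext i j
  rw [show ((tvu p q hpq a : Matrix.GeneralLinearGroup (Fin m) R) : Matrix (Fin m) (Fin m) R)
      = transvection p q a from rfl]
  rw [mul_tv_apply]
  by_cases hj : j = q <;> simp [hj]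

theorem MR_multi (σ : Matrix (Fin r) (Fin m) R) (p : Fin m) (g : Fin m → R)
    (s : Finset (Fin m)) (hp : p ∉ s) :
    MR σ (fun i j => if j ∈ s then σ i j + σ i p * g j else σ i j) := by
  classical
  induction s using Finset.induction with
  | empty => simpa using MR.refl σ
  | @insert q s hq ih =>
    have hps : p ∉ s := fun h => hp (Finset.mem_insert_of_mem h)
    have hpq : p ≠ q := fun h => hp (h ▸ Finset.mem_insert_self q s)
    refine (ih hps).trans ?_
    have h2 := MR_colOp (R := R) (m := m) (r := r)
      (fun i j => if j ∈ s then σ i j + σ i p * g j else σ i j) hpq (g q)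
    have heq : (fun i j => if j = q
          then (if q ∈ s then σ i q + σ i p * g q else σ i q)
            + (if p ∈ s then σ i p + σ i p * g p else σ i p) * g q
          else if j ∈ s then σ i j + σ i p * g j else σ i j)
        = fun i j => if j ∈ insert q s then σ i j + σ i p * g j else σ i j := by
      funext i j
      by_cases hjq : j = q
      · subst hjq
        simp [hq, hps, Finset.mem_insert_self]
      · by_cases hjs : j ∈ s <;> simp [hjq, hjs, Finset.mem_insert, hjq]
    rw [heq] at h2
    exact h2

theorem MR_combo (σ : Matrix (Fin r) (Fin m) R) (q : Fin m) (f : Fin m → R) (hf : f q = 0) :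
    MR σ (fun i j => if j = q then σ i q + ∑ k, f k * σ i k else σ i j) := by
  classical
  have main : ∀ s : Finset (Fin m), q ∉ s →
      MR σ (fun i j => if j = q then σ i q + ∑ k ∈ s, f k * σ i k else σ i j) := by
    intro s
    induction s using Finset.induction with
    | empty =>
      intro _
      have heq : (fun i j => if j = q then σ i q + ∑ k ∈ (∅ : Finset (Fin m)), f k * σ i k
          else σ i j) = σ := by
        funext i j
        by_cases hjq : j = q <;> simp [hjq]
      rw [heq]
      exact MR.refl σ
    | @insert p s hp ih =>
      intro hqps
      have hqs : q ∉ s := fun h => hqps (Finset.mem_insert_of_mem h)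
      have hpq : p ≠ q := fun h => hqps (h ▸ Finset.mem_insert_self p s)
      refine (ih hqs).trans ?_
      have h2 := MR_colOp (R := R) (m := m) (r := r)
        (fun i j => if j = q then σ i q + ∑ k ∈ s, f k * σ i k else σ i j) hpq (f p)
      have heq : (fun i j => if j = q
            then (if q = q then σ i q + ∑ k ∈ s, f k * σ i k else σ i q)
              + (if p = q then σ i q + ∑ k ∈ s, f k * σ i k else σ i p) * f p
            else if j = q then σ i q + ∑ k ∈ s, f k * σ i k else σ i j)
          = fun i j => if j = q then σ i q + ∑ k ∈ insert p s, f k * σ i k else σ i j := by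
        funext i j
        by_cases hjq : j = q
        · subst hjq
          rw [if_pos rfl, if_pos rfl, if_pos rfl, if_neg hpq, Finset.sum_insert hp]
          ring
        · simp [hjq]
      rw [heq] at h2
      exact h2
  have h := main (Finset.univ.erase q) (Finset.notMem_erase q _)
  have heq : (fun i j => if j = q then σ i q + ∑ k ∈ Finset.univ.erase q, f k * σ i k else σ i j)
      = fun i j => if j = q then σ i q + ∑ k, f k * σ i k else σ i j := by
    funext i j
    congr 1
    rw [Finset.sum_erase _ (by rw [hf, zero_mul])]
  rwa [heq] at h


theorem row_reduce (σ : Matrix (Fin r) (Fin (m + 1)) R) (i₀ : Fin r)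
    (hu : ∃ c : Fin (m + 1) → R, ∑ k, c k * σ i₀ k = 1)
    (hB : ∀ (a₀ : R) (v : Fin m → R),
      (∃ (c₀ : R) (c : Fin m → R), c₀ * a₀ + ∑ i, c i * v i = 1) →
      ∃ t c : Fin m → R, ∑ i, c i * (v i + t i * a₀) = 1) :
    ∃ τ, MR σ τ ∧ ∀ j, τ i₀ j = if j = 0 then 1 else 0 := by
  classical
  obtain ⟨c, hc⟩ := hu
  set a₀ := σ i₀ 0 with ha₀
  obtain ⟨t, cc, hcc⟩ := hB a₀ (fun i => σ i₀ i.succ)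
    ⟨c 0, fun i => c i.succ, by rw [← hc, Fin.sum_univ_succ]⟩
  set s : Finset (Fin (m + 1)) := Finset.univ.erase 0 with hs
  have hmem_s : ∀ j : Fin (m + 1), j ∈ s ↔ j ≠ 0 := by
    intro j; rw [hs, Finset.mem_erase]; simp
  have h0s : (0 : Fin (m + 1)) ∉ s := by rw [hmem_s]; simp
  -- step 1
  set g : Fin (m + 1) → R := Fin.cons 0 t with hg
  have h1 := MR_multi σ 0 g s h0s
  set σ₁ : Matrix (Fin r) (Fin (m + 1)) R :=
    fun i j => if j ∈ s then σ i j + σ i 0 * g j else σ i j with hσ₁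
  have hσ₁0 : σ₁ i₀ 0 = a₀ := by rw [hσ₁]; simp [h0s, ha₀]
  have hσ₁succ : ∀ j : Fin m, σ₁ i₀ j.succ = σ i₀ j.succ + t j * a₀ := by
    intro j
    have : j.succ ∈ s := (hmem_s _).mpr (Fin.succ_ne_zero j)
    rw [hσ₁]
    simp only [this, if_true, hg, Fin.cons_succ]
    ring
  -- step 2
  set f : Fin (m + 1) → R := Fin.cons 0 (fun i => cc i * (1 - a₀)) with hf
  have h2 := MR_combo σ₁ 0 f (by rw [hf]; simp)
  set σ₂ : Matrix (Fin r) (Fin (m + 1)) R :=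
    fun i j => if j = 0 then σ₁ i 0 + ∑ k, f k * σ₁ i k else σ₁ i j with hσ₂
  have hσ₂0 : σ₂ i₀ 0 = 1 := by
    rw [hσ₂]
    simp only [if_pos rfl]
    rw [Fin.sum_univ_succ]
    simp only [hf, Fin.cons_zero, Fin.cons_succ, zero_mul, zero_add]
    have hstep : ∀ j : Fin m, cc j * (1 - a₀) * σ₁ i₀ j.succ
        = (1 - a₀) * (cc j * (σ i₀ j.succ + t j * a₀)) := by
      intro j; rw [hσ₁succ j]; ring
    rw [Finset.sum_congr rfl fun j _ => hstep j, ← Finset.mul_sum, hcc, hσ₁0]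
    ring_nf
    simp
  have hσ₂succ : ∀ j : Fin (m + 1), j ≠ 0 → σ₂ i₀ j = σ₁ i₀ j := by
    intro j hj; rw [hσ₂]; simp [hj]
  -- step 3
  have h3 := MR_multi σ₂ 0 (fun j => -σ₂ i₀ j) s h0s
  refine ⟨_, (h1.trans h2).trans h3, ?_⟩
  intro j
  by_cases hj : j = 0
  · subst hj
    simp only [h0s, if_false, if_pos rfl]
    exact hσ₂0
  · have hjs : j ∈ s := (hmem_s _).mpr hj
    simp only [hjs, if_true, hj, if_false, hσ₂0]
    ring


/-- embedding of an `m × m` matrix as lower-right block with `1` at `(0,0)`. -/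
def emb (M : Matrix (Fin m) (Fin m) R) : Matrix (Fin (m + 1)) (Fin (m + 1)) R :=
  Matrix.of (Fin.cons ((Fin.cons (1 : R) (fun _ => (0 : R))) : Fin (m + 1) → R)
    (fun i' => (Fin.cons (0 : R) (fun j' => M i' j') : Fin (m + 1) → R)))

@[simp] theorem emb_zero_zero (M : Matrix (Fin m) (Fin m) R) : emb M 0 0 = 1 := by
  simp [emb]

@[simp] theorem emb_zero_succ (M : Matrix (Fin m) (Fin m) R) (j : Fin m) :
    emb M 0 j.succ = 0 := by simp [emb]

@[simp] theorem emb_succ_zero (M : Matrix (Fin m) (Fin m) R) (i : Fin m) :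
    emb M i.succ 0 = 0 := by simp [emb]

@[simp] theorem emb_succ_succ (M : Matrix (Fin m) (Fin m) R) (i j : Fin m) :
    emb M i.succ j.succ = M i j := by simp [emb]

theorem emb_one : emb (1 : Matrix (Fin m) (Fin m) R) = 1 := by
  ext i j
  induction i using Fin.cases with
  | zero =>
    induction j using Fin.cases with
    | zero => simp [Matrix.one_apply]
    | succ j => simp [Matrix.one_apply, (Fin.succ_ne_zero j).symm]
  | succ i =>
    induction j using Fin.cases with
    | zero => simp [Matrix.one_apply, Fin.succ_ne_zero i]
    | succ j => simp [Matrix.one_apply, Fin.succ_inj]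

theorem emb_mul (M N : Matrix (Fin m) (Fin m) R) : emb (M * N) = emb M * emb N := by
  ext i j
  rw [Matrix.mul_apply]
  induction i using Fin.cases with
  | zero =>
    induction j using Fin.cases with
    | zero => rw [Fin.sum_univ_succ]; simp
    | succ j => rw [Fin.sum_univ_succ]; simp
  | succ i =>
    induction j using Fin.cases with
    | zero => rw [Fin.sum_univ_succ]; simp
    | succ j => rw [Fin.sum_univ_succ]; simp [Matrix.mul_apply]

/-- `emb` as a monoid hom. -/
def embHom : Matrix (Fin m) (Fin m) R →* Matrix (Fin (m + 1)) (Fin (m + 1)) R where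
  toFun := emb
  map_one' := emb_one
  map_mul' := emb_mul

theorem embGL_mem {g : Matrix.GeneralLinearGroup (Fin m) R} (hg : g ∈ elementarySubgroup R m) :
    Units.map (embHom (R := R) (m := m)) g ∈ elementarySubgroup R (m + 1) := by
  have hle : elementarySubgroup R m ≤
      Subgroup.comap (Units.map (embHom (R := R) (m := m))) (elementarySubgroup R (m + 1)) := by
    rw [elementarySubgroup]
    rw [Subgroup.closure_le]
    rintro x ⟨i, j, a, hij, hx⟩
    refine Subgroup.subset_closure ⟨i.succ, j.succ, a, fun h => hij (Fin.succ_inj.mp h), ?_⟩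
    show emb (x : Matrix (Fin m) (Fin m) R) = _
    rw [hx]
    ext i' j'
    induction i' using Fin.cases with
    | zero =>
      induction j' using Fin.cases with
      | zero =>
        simp [Matrix.one_apply, Matrix.single, Matrix.add_apply, Matrix.of_apply,
          Fin.succ_ne_zero]
      | succ j' =>
        simp [Matrix.one_apply, Matrix.single, Matrix.add_apply, Matrix.of_apply,
          Fin.succ_ne_zero, (Fin.succ_ne_zero j').symm]
    | succ i' =>
      induction j' using Fin.cases with
      | zero =>
        simp [Matrix.one_apply, Matrix.single, Matrix.add_apply, Matrix.of_apply,
          Fin.succ_ne_zero, (Fin.succ_ne_zero i').symm]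
      | succ j' =>
        simp [Matrix.one_apply, Matrix.single, Matrix.add_apply, Matrix.of_apply,
          Fin.succ_inj]
  exact hle hg


/-- the `r × m` matrix `(1 | 0)`. -/
def Jmat (r m : ℕ) : Matrix (Fin r) (Fin m) R :=
  Matrix.of fun i j => if (j : ℕ) = (i : ℕ) then 1 else 0

@[simp] theorem emb_zero_apply (M : Matrix (Fin m) (Fin m) R) (j : Fin (m + 1)) :
    emb M 0 j = if j = 0 then 1 else 0 := by
  induction j using Fin.cases with
  | zero => simp
  | succ j => simp [Fin.succ_ne_zero]

theorem mat_reduce (n : ℕ)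
    (hB : ∀ m' : ℕ, n ≤ m' + 1 → ∀ (a₀ : R) (v : Fin m' → R),
      (∃ (c₀ : R) (c : Fin m' → R), c₀ * a₀ + ∑ i, c i * v i = 1) →
      ∃ t c : Fin m' → R, ∑ i, c i * (v i + t i * a₀) = 1) :
    ∀ (r : ℕ) (σ : Matrix (Fin r) (Fin (n + r)) R),
      (∃ τ : Matrix (Fin (n + r)) (Fin r) R, σ * τ = 1) →
      ∃ g : Matrix.GeneralLinearGroup (Fin (n + r)) R, g ∈ elementarySubgroup R (n + r) ∧
        σ * (g : Matrix (Fin (n + r)) (Fin (n + r)) R) = Jmat r (n + r) := by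
  intro r
  induction r with
  | zero =>
    intro σ _
    refine ⟨1, one_mem _, ?_⟩
    ext i j
    exact i.elim0
  | succ r IH =>
    show ∀ σ : Matrix (Fin (r + 1)) (Fin ((n + r) + 1)) R,
      (∃ τ : Matrix (Fin ((n + r) + 1)) (Fin (r + 1)) R, σ * τ = 1) →
      ∃ g : Matrix.GeneralLinearGroup (Fin ((n + r) + 1)) R,
        g ∈ elementarySubgroup R ((n + r) + 1) ∧
        σ * (g : Matrix (Fin ((n + r) + 1)) (Fin ((n + r) + 1)) R) = Jmat (r + 1) ((n + r) + 1)
    intro σ hσ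
    obtain ⟨τ, hτ⟩ := hσ
    classical
    -- row 0 is unimodular
    have hrow : ∃ c : Fin ((n + r) + 1) → R, ∑ k, c k * σ 0 k = 1 := by
      refine ⟨fun k => τ k 0, ?_⟩
      have h1 : (σ * τ) 0 0 = 1 := by rw [hτ]; simp [Matrix.one_apply]
      rw [Matrix.mul_apply] at h1
      rw [← h1]
      exact Finset.sum_congr rfl fun k _ => mul_comm _ _
    obtain ⟨σ₁, hMR1, hrow1⟩ := row_reduce σ 0 hrow (hB (n + r) (by omega))
    obtain ⟨g₁, hg₁, hgeq₁⟩ := hMR1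
    set τ₁ : Matrix (Fin ((n + r) + 1)) (Fin (r + 1)) R :=
      ((g₁⁻¹ : Matrix.GeneralLinearGroup (Fin ((n + r) + 1)) R) :
        Matrix (Fin ((n + r) + 1)) (Fin ((n + r) + 1)) R) * τ with hτ₁def
    have hστ₁ : σ₁ * τ₁ = 1 := by
      rw [hτ₁def, ← hgeq₁, Matrix.mul_assoc, ← Matrix.mul_assoc
        ((g₁ : Matrix (Fin ((n + r) + 1)) (Fin ((n + r) + 1)) R)), Units.mul_inv,
        Matrix.one_mul, hτ]
    have hτ₁top : ∀ j' : Fin (r + 1),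
        τ₁ 0 j' = (1 : Matrix (Fin (r + 1)) (Fin (r + 1)) R) 0 j' := by
      intro j'
      have h1 : (σ₁ * τ₁) 0 j' = (1 : Matrix (Fin (r + 1)) (Fin (r + 1)) R) 0 j' := by rw [hστ₁]
      rw [Matrix.mul_apply] at h1
      have h2 : ∑ k, σ₁ 0 k * τ₁ k j' = τ₁ 0 j' := by
        calc ∑ k, σ₁ 0 k * τ₁ k j'
            = ∑ k, (if k = 0 then 1 else 0) * τ₁ k j' :=
              Finset.sum_congr rfl fun k _ => by rw [hrow1 k]
          _ = τ₁ 0 j' := by simp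
      rw [← h2]
      exact h1
    have hτ₁0succ : ∀ j : Fin r, τ₁ 0 j.succ = 0 := by
      intro j
      rw [hτ₁top, Matrix.one_apply, if_neg (Fin.succ_ne_zero j).symm]
    -- the submatrix
    set σ' : Matrix (Fin r) (Fin (n + r)) R := Matrix.of fun i j => σ₁ i.succ j.succ with hσ'
    set τ' : Matrix (Fin (n + r)) (Fin r) R := Matrix.of fun i j => τ₁ i.succ j.succ with hτ'
    have hστ' : σ' * τ' = 1 := by
      ext i j
      rw [Matrix.mul_apply]
      have h1 : (σ₁ * τ₁) i.succ j.succ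
          = (1 : Matrix (Fin (r + 1)) (Fin (r + 1)) R) i.succ j.succ := by rw [hστ₁]
      rw [Matrix.mul_apply, Fin.sum_univ_succ, hτ₁0succ, mul_zero, zero_add] at h1
      rw [show ∑ k, σ' i k * τ' k j = ∑ k : Fin (n + r), σ₁ i.succ k.succ * τ₁ k.succ j.succ
        from rfl, h1]
      simp [Matrix.one_apply, Fin.succ_inj]
    obtain ⟨g', hg', heq'⟩ := IH σ' ⟨τ', hστ'⟩
    set gh := Units.map (embHom (R := R) (m := n + r)) g' with hgh
    have hghmem : gh ∈ elementarySubgroup R ((n + r) + 1) := embGL_mem hg'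
    have hghval : (gh : Matrix (Fin ((n + r) + 1)) (Fin ((n + r) + 1)) R)
        = emb (g' : Matrix (Fin (n + r)) (Fin (n + r)) R) := rfl
    set σ₂ : Matrix (Fin (r + 1)) (Fin ((n + r) + 1)) R :=
      σ₁ * (gh : Matrix (Fin ((n + r) + 1)) (Fin ((n + r) + 1)) R) with hσ₂def
    have hMR2 : MR σ₁ σ₂ := ⟨gh, hghmem, rfl⟩
    have hσ₂row0 : ∀ j, σ₂ 0 j = if j = 0 then 1 else 0 := by
      intro j
      rw [hσ₂def, Matrix.mul_apply, hghval, Fin.sum_univ_succ]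
      have h2 : ∀ k : Fin (n + r),
          σ₁ 0 k.succ * emb (g' : Matrix (Fin (n + r)) (Fin (n + r)) R) k.succ j = 0 := by
        intro k
        rw [hrow1 k.succ, if_neg (Fin.succ_ne_zero k), zero_mul]
      rw [Finset.sum_congr rfl fun k _ => h2 k, hrow1 0, if_pos rfl]
      simp
    have hσ₂s0 : ∀ i : Fin r, σ₂ i.succ 0 = σ₁ i.succ 0 := by
      intro i
      rw [hσ₂def, Matrix.mul_apply, hghval, Fin.sum_univ_succ]
      simp
    have hσ₂ss : ∀ (i : Fin r) (j : Fin (n + r)),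
        σ₂ i.succ j.succ = if (j : ℕ) = (i : ℕ) then 1 else 0 := by
      intro i j
      rw [hσ₂def, Matrix.mul_apply, hghval, Fin.sum_univ_succ, emb_zero_succ, mul_zero, zero_add]
      have h1 : (σ' * (g' : Matrix (Fin (n + r)) (Fin (n + r)) R)) i j
          = Jmat r (n + r) i j := by rw [heq']
      rw [Matrix.mul_apply] at h1
      have h2 : ∑ k : Fin (n + r),
          σ₁ i.succ k.succ * emb (g' : Matrix (Fin (n + r)) (Fin (n + r)) R) k.succ j.succ
          = ∑ k : Fin (n + r), σ' i k * (g' : Matrix (Fin (n + r)) (Fin (n + r)) R) k j := by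
        refine Finset.sum_congr rfl fun k _ => ?_
        rw [emb_succ_succ]
        rfl
      rw [h2, h1]
      rfl
    -- final column clearing
    set f : Fin ((n + r) + 1) → R := Fin.cons 0
      (fun k : Fin (n + r) =>
        if h : (k : ℕ) < r then -(σ₂ (Fin.succ ⟨(k : ℕ), h⟩) 0) else 0) with hf
    have h3 := MR_combo σ₂ 0 f (by rw [hf]; simp)
    set σ₃ : Matrix (Fin (r + 1)) (Fin ((n + r) + 1)) R :=
      fun i j => if j = 0 then σ₂ i 0 + ∑ k, f k * σ₂ i k else σ₂ i j with hσ₃def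
    have hsum0 : ∑ k, f k * σ₂ 0 k = 0 := by
      rw [Fin.sum_univ_succ, hf, Fin.cons_zero, zero_mul, zero_add]
      refine Finset.sum_eq_zero fun k _ => ?_
      rw [hσ₂row0 k.succ, if_neg (Fin.succ_ne_zero k), mul_zero]
    have hsums : ∀ i : Fin r, ∑ k, f k * σ₂ i.succ k = -(σ₂ i.succ 0) := by
      intro i
      have hi : (i : ℕ) < n + r := lt_of_lt_of_le i.isLt (by omega)
      rw [Fin.sum_univ_succ, hf]
      simp only [Fin.cons_zero, Fin.cons_succ, zero_mul, zero_add]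
      rw [Finset.sum_eq_single (⟨(i : ℕ), hi⟩ : Fin (n + r))]
      · rw [hσ₂ss i ⟨(i : ℕ), hi⟩, dif_pos (show (((⟨(i : ℕ), hi⟩ : Fin (n + r)) : ℕ) < r)
          from i.isLt), if_pos rfl]
        have h4 : (⟨((⟨(i : ℕ), hi⟩ : Fin (n + r)) : ℕ), i.isLt⟩ : Fin r) = i := rfl
        rw [h4, mul_one]
      · intro k _ hk
        rw [hσ₂ss i k, if_neg (fun h => hk (Fin.ext h)), mul_zero]
      · intro h
        exact absurd (Finset.mem_univ _) h
    have hfinal : σ₃ = Jmat (r + 1) ((n + r) + 1) := by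
      ext i j
      induction j using Fin.cases with
      | zero =>
        induction i using Fin.cases with
        | zero =>
          rw [hσ₃def]
          simp only [if_pos rfl]
          rw [hsum0, hσ₂row0 0, if_pos rfl]
          simp [Jmat]
        | succ i =>
          rw [hσ₃def]
          simp only [if_pos rfl]
          rw [hsums i]
          have h5 : σ₂ i.succ 0 + -(σ₂ i.succ 0) = 0 := by ring
          rw [h5]
          have h0 : ((0 : Fin ((n + r) + 1)) : ℕ) ≠ ((Fin.succ i : Fin (r + 1)) : ℕ) := by
            simp [Fin.val_succ]
          simp only [Jmat, Matrix.of_apply]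
          rw [if_neg h0]
          simp
      | succ j =>
        induction i using Fin.cases with
        | zero =>
          rw [hσ₃def]
          simp only [if_neg (Fin.succ_ne_zero j)]
          rw [hσ₂row0 j.succ, if_neg (Fin.succ_ne_zero j)]
          have h0 : ((Fin.succ j : Fin ((n + r) + 1)) : ℕ) ≠ ((0 : Fin (r + 1)) : ℕ) := by
            simp [Fin.val_succ]
          simp only [Jmat, Matrix.of_apply]
          rw [if_neg h0]
        | succ i =>
          rw [hσ₃def]
          simp only [if_neg (Fin.succ_ne_zero j)]
          rw [hσ₂ss i j]
          simp only [Jmat, Matrix.of_apply, Fin.val_succ]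
          by_cases h : (j : ℕ) = (i : ℕ)
          · rw [if_pos h, if_pos (by omega)]
          · rw [if_neg h, if_neg (by omega)]
    have hMRtotal : MR σ σ₃ := (MR.trans ⟨g₁, hg₁, hgeq₁⟩ hMR2).trans h3
    obtain ⟨g, hg, hgeq⟩ := hMRtotal
    exact ⟨g, hg, by rw [hgeq, hfinal]⟩
end ElemAux


theorem stmt4 {R : Type*} [CommRing R] [IsNoetherianRing R] (n r : ℕ)
    (hn : 0 < n) (hr : 0 < r)
    (hdim : ringKrullDim R + ((3 : ℕ) : WithBot ℕ∞) ≤ ((n : ℕ) : WithBot ℕ∞))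
    (σ : Matrix (Fin r) (Fin (n + r)) R)
    (hσ : ∃ τ : Matrix (Fin (n + r)) (Fin r) R, σ * τ = 1) :
    ∃ Δ ∈ elementarySubgroup R (n + r),
      ∀ (i : Fin r) (j : Fin (n + r)),
        (Δ : Matrix (Fin (n + r)) (Fin (n + r)) R) (Fin.castLE (Nat.le_add_left r n) i) j
          = σ i j := by
  classical
  rcases subsingleton_or_nontrivial R with hS | hN
  · exact ⟨1, one_mem _, fun i j => Subsingleton.elim _ _⟩
  · have h3n : 3 ≤ n := by
      have h0 : (0 : WithBot ℕ∞) ≤ ringKrullDim R :=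
        ringKrullDim_nonneg_of_nontrivial
      have h1 : ((3 : ℕ) : WithBot ℕ∞) ≤ ((n : ℕ) : WithBot ℕ∞) := by
        calc ((3 : ℕ) : WithBot ℕ∞) = 0 + ((3 : ℕ) : WithBot ℕ∞) := by
              rw [zero_add]
          _ ≤ ringKrullDim R + ((3 : ℕ) : WithBot ℕ∞) := add_le_add_left h0 _
          _ ≤ ((n : ℕ) : WithBot ℕ∞) := hdim
      exact_mod_cast h1
    have hCC : ∀ a₀ : R, PrimeChainCond R (n - 3) a₀ := by
      intro a₀ k c hsm hpr _
      have := chain_le_of_krullDim hdim k c hsm hpr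
      omega
    have hB : ∀ m' : ℕ, n ≤ m' + 1 → ∀ (a₀ : R) (v : Fin m' → R),
        (∃ (c₀ : R) (c : Fin m' → R), c₀ * a₀ + ∑ i, c i * v i = 1) →
        ∃ t c : Fin m' → R, ∑ i, c i * (v i + t i * a₀) = 1 := by
      intro m' hm' a₀ v hu
      exact bassSR a₀ (hCC a₀) (by omega) v hu
    obtain ⟨g, hg, hgeq⟩ := ElemAux.mat_reduce n hB r σ hσ
    refine ⟨g⁻¹, inv_mem hg, ?_⟩
    intro i j
    have key : σ = ElemAux.Jmat (R := R) r (n + r) *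
        ((g⁻¹ : Matrix.GeneralLinearGroup (Fin (n + r)) R) :
          Matrix (Fin (n + r)) (Fin (n + r)) R) := by
      rw [← hgeq, Matrix.mul_assoc, Units.mul_inv, Matrix.mul_one]
    conv_rhs => rw [key]
    rw [Matrix.mul_apply]
    have hstep : ∀ k : Fin (n + r), ElemAux.Jmat r (n + r) i k *
        ((g⁻¹ : Matrix.GeneralLinearGroup (Fin (n + r)) R) :
          Matrix (Fin (n + r)) (Fin (n + r)) R) k j
        = if k = Fin.castLE (Nat.le_add_left r n) i
            then ((g⁻¹ : Matrix.GeneralLinearGroup (Fin (n + r)) R) :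
              Matrix (Fin (n + r)) (Fin (n + r)) R) k j else 0 := by
      intro k
      show (if (k : ℕ) = (i : ℕ) then (1 : R) else 0) * _ = _
      have hiff : ((k : ℕ) = (i : ℕ)) ↔ k = Fin.castLE (Nat.le_add_left r n) i := by
        rw [Fin.ext_iff]
        rfl
      by_cases h : (k : ℕ) = (i : ℕ)
      · rw [if_pos h, if_pos (hiff.mp h), one_mul]
      · rw [if_neg h, if_neg (fun hh => h (hiff.mpr hh)), zero_mul]
    rw [Finset.sum_congr rfl fun k _ => hstep k, Finset.sum_ite_eq' Finset.univ _ _,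
      if_pos (Finset.mem_univ _)]
end

section
/- Let A be a commutative ring and let I, K, J, N be ideals of A such that I ⊆ J, N ⊆ J, J ⊆ N + I + J², and I + K = A. Then J = N + (I ∩ K) + J². -/
theorem stmt7 {A : Type*} [CommRing A] (I K J N : Ideal A)
    (hIJ : I ≤ J) (hNJ : N ≤ J) (hJ : J ≤ N + I + J ^ 2) (hIK : I + K = ⊤) :
    J = N + (I ⊓ K) + J ^ 2 := by
  apply le_antisymm
  · have hI : I ≤ I ⊓ K + J ^ 2 := by
      calc I = I * (I + K) := by rw [hIK, Ideal.mul_top]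
      _ = I * I + I * K := mul_add _ _ _
      _ ≤ J ^ 2 + I ⊓ K := by
          gcongr
          · rw [sq]; exact Ideal.mul_mono hIJ hIJ
          · exact Ideal.mul_le_inf
      _ = I ⊓ K + J ^ 2 := add_comm _ _
    calc J ≤ N + I + J ^ 2 := hJ
    _ ≤ N + (I ⊓ K + J ^ 2) + J ^ 2 := by gcongr
    _ = N + (I ⊓ K) + (J ^ 2 + J ^ 2) := by abel
    _ = N + (I ⊓ K) + J ^ 2 := by
        rw [show J ^ 2 + J ^ 2 = J ^ 2 from by rw [Submodule.add_eq_sup, sup_idem]]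
  · have hJ2 : J ^ 2 ≤ J := by rw [sq]; exact Ideal.mul_le_right
    exact add_le_add (add_le_add hNJ (inf_le_left.trans hIJ)) hJ2 |>.trans (by simp)
end
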